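/- Let D ∈ ℝ^{n×n} and E ∈ ℝ^{2m×2m} be positive definite diagonal matrices, Ψ ∈ ℝ^{n×2m}, and σ > 0, τ ∈ ℝ^{n} with τᵢ > 0. If D ≻ (1/4)·Ψ E⁻¹ Ψᵀ and 0 < σ < λ_min(2D - (1/2)·Ψ E⁻¹ Ψᵀ) · min_i τᵢ, then the block matrix [[2D - σ·diag(τ)⁻¹, -Ψ], [-Ψᵀ, 2E]] is positive definite. -/

import Mathlib

open Matrix

/-- Rayleigh-quotient lower bound: the smallest eigenvalue bounds the quadratic form. -/
private lemma rayleigh_min {k : Type*} [Fintype k] [DecidableEq k]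
    {A : Matrix k k ℝ} (hA : A.IsHermitian) (x : k → ℝ) :
    (⨅ i, hA.eigenvalues i) * (x ⬝ᵥ x) ≤ x ⬝ᵥ A *ᵥ x := by
  cases isEmpty_or_nonempty k with
  | inl h =>
    simp [dotProduct]
  | inr h =>
    set c := ⨅ i, hA.eigenvalues i with hc
    have hbdd : BddBelow (Set.range hA.eigenvalues) :=
      Set.Finite.bddBelow (Set.finite_range _)
    have hle : ∀ i, c ≤ hA.eigenvalues i := fun i => ciInf_le hbdd i
    set U : Matrix k k ℝ := (hA.eigenvectorUnitary : Matrix k k ℝ) with hUdef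
    have hU1 : U * Uᴴ = 1 := by
      rw [← Matrix.star_eq_conjTranspose]
      exact Matrix.mem_unitaryGroup_iff.mp hA.eigenvectorUnitary.2
    have hspec : A = U * Matrix.diagonal hA.eigenvalues * Uᴴ := by
      have := hA.spectral_theorem
      rw [Unitary.conjStarAlgAut_apply] at this
      rw [← Matrix.star_eq_conjTranspose]
      exact this
    have hB : A - c • (1 : Matrix k k ℝ) =
        U * Matrix.diagonal (fun i => hA.eigenvalues i - c) * Uᴴ := by
      have hdiag : Matrix.diagonal (fun i => hA.eigenvalues i - c)
          = Matrix.diagonal hA.eigenvalues - c • (1 : Matrix k k ℝ) := by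
        rw [Matrix.smul_one_eq_diagonal, ← Matrix.diagonal_sub]
      rw [hdiag, Matrix.mul_sub, Matrix.sub_mul, ← hspec, Matrix.mul_smul,
        Matrix.smul_mul, Matrix.mul_one, hU1]
    have hps : (A - c • (1 : Matrix k k ℝ)).PosSemidef := by
      rw [hB]
      exact (Matrix.posSemidef_diagonal_iff.mpr fun i => sub_nonneg.mpr (hle i)
        ).mul_mul_conjTranspose_same U
    have h0 := hps.dotProduct_mulVec_nonneg x
    have hstar : star x = x := by
      funext i; simp
    rw [hstar, Matrix.sub_mulVec, Matrix.smul_mulVec, Matrix.one_mulVec,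
      dotProduct_sub, dotProduct_smul] at h0
    have : x ⬝ᵥ c • x = c * (x ⬝ᵥ x) := by
      simp [dotProduct, Finset.mul_sum, mul_comm, mul_assoc, mul_left_comm]
    rw [smul_eq_mul] at h0
    linarith [h0]

/-- If the lower-right block is positive definite and the Schur complement is positive
definite, the block matrix is positive definite. -/
private lemma posDef_fromBlocks₂₂' {m n : Type*} [Fintype m] [Fintype n]
    [DecidableEq m] [DecidableEq n]
    {A : Matrix m m ℝ} (B : Matrix m n ℝ) {D : Matrix n n ℝ} (hD : D.PosDef)
    [Invertible D] (hS : (A - B * D⁻¹ * Bᴴ).PosDef) :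
    (Matrix.fromBlocks A B Bᴴ D).PosDef := by
  refine Matrix.PosDef.of_dotProduct_mulVec_pos ((Matrix.IsHermitian.fromBlocks₂₂ A B hD.1).mpr hS.1) fun z hz => ?_
  set x := z ∘ Sum.inl with hx
  set y := z ∘ Sum.inr with hy
  have hz' : z = Sum.elim x y := (Sum.elim_comp_inl_inr z).symm
  have key := Matrix.schur_complement_eq₂₂ A B x y hD.1
  rw [Matrix.dotProduct_mulVec, hz', key]
  rw [← Matrix.dotProduct_mulVec, ← Matrix.dotProduct_mulVec]
  by_cases hx0 : x = 0
  · have hy0 : y ≠ 0 := by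
      intro h
      apply hz
      rw [hz', hx0, h]
      ext (i | i) <;> simp
    have h1 : (0:ℝ) < star ((D⁻¹ * Bᴴ) *ᵥ x + y) ⬝ᵥ D *ᵥ ((D⁻¹ * Bᴴ) *ᵥ x + y) := by
      apply hD.dotProduct_mulVec_pos
      rw [hx0]
      simpa using hy0
    have h2 : (0:ℝ) ≤ star x ⬝ᵥ (A - B * D⁻¹ * Bᴴ) *ᵥ x := hS.posSemidef.dotProduct_mulVec_nonneg x
    linarith
  · have h1 : (0:ℝ) ≤ star ((D⁻¹ * Bᴴ) *ᵥ x + y) ⬝ᵥ D *ᵥ ((D⁻¹ * Bᴴ) *ᵥ x + y) :=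
      hD.posSemidef.dotProduct_mulVec_nonneg _
    have h2 : (0:ℝ) < star x ⬝ᵥ (A - B * D⁻¹ * Bᴴ) *ᵥ x := hS.dotProduct_mulVec_pos hx0
    linarith

theorem stmt_9 (n m : ℕ) (d : Fin n → ℝ) (e : Fin (2 * m) → ℝ)
    (hd : ∀ i, 0 < d i) (he : ∀ i, 0 < e i)
    (Ψ : Matrix (Fin n) (Fin (2 * m)) ℝ) (σ : ℝ) (τ : Fin n → ℝ)
    (hτ : ∀ i, 0 < τ i)
    (D : Matrix (Fin n) (Fin n) ℝ) (hD : D = Matrix.diagonal d)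
    (E : Matrix (Fin (2 * m)) (Fin (2 * m)) ℝ) (hE : E = Matrix.diagonal e)
    (hDdom : (D - (1 / 4 : ℝ) • (Ψ * E⁻¹ * Ψᵀ)).PosDef)
    (A : Matrix (Fin n) (Fin n) ℝ)
    (hA : A = (2 : ℝ) • D - (1 / 2 : ℝ) • (Ψ * E⁻¹ * Ψᵀ))
    (hAh : A.IsHermitian)
    (hσ : 0 < σ) (hσ2 : σ < (⨅ i, hAh.eigenvalues i) * ⨅ i, τ i) :
    (Matrix.fromBlocks ((2 : ℝ) • D - σ • (Matrix.diagonal τ)⁻¹) (-Ψ)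
      (-Ψᵀ) ((2 : ℝ) • E)).PosDef := by
  -- E is positive definite, hence invertible
  have hEpd : E.PosDef := by rw [hE]; exact Matrix.posDef_diagonal_iff.mpr he
  have h2E : ((2 : ℝ) • E).PosDef := by
    rw [hE, ← Matrix.diagonal_smul]
    exact Matrix.posDef_diagonal_iff.mpr fun i => by
      have := he i; simp only [Pi.smul_apply, smul_eq_mul]; linarith
  haveI : Invertible ((2 : ℝ) • E) :=
    Matrix.invertibleOfIsUnitDet _ (isUnit_iff_ne_zero.mpr h2E.det_pos.ne')
  have hEE : E * E⁻¹ = 1 :=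
    Matrix.mul_nonsing_inv _ (isUnit_iff_ne_zero.mpr hEpd.det_pos.ne')
  have hinv2E : ((2 : ℝ) • E)⁻¹ = (1 / 2 : ℝ) • E⁻¹ := by
    apply Matrix.inv_eq_right_inv
    rw [Matrix.mul_smul, Matrix.smul_mul, hEE, smul_smul]
    norm_num
  -- inverse of diagonal τ
  have hτinv : (Matrix.diagonal τ)⁻¹ = Matrix.diagonal (fun i => (τ i)⁻¹) := by
    apply Matrix.inv_eq_right_inv
    rw [Matrix.diagonal_mul_diagonal]
    convert Matrix.diagonal_one using 2
    funext i
    exact mul_inv_cancel₀ (hτ i).ne'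
  -- the Schur complement is A - σ • diagonal τ⁻¹, which is positive definite
  have hSpd : (((2 : ℝ) • D - σ • (Matrix.diagonal τ)⁻¹)
      - (-Ψ) * ((2 : ℝ) • E)⁻¹ * (-Ψ)ᴴ).PosDef := by
    have hform : ((2 : ℝ) • D - σ • (Matrix.diagonal τ)⁻¹)
        - (-Ψ) * ((2 : ℝ) • E)⁻¹ * (-Ψ)ᴴ
        = A - σ • Matrix.diagonal (fun i => (τ i)⁻¹) := by
      rw [hinv2E, hτinv, hA, Matrix.conjTranspose_neg,
        Matrix.conjTranspose_eq_transpose_of_trivial]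
      simp only [Matrix.neg_mul, Matrix.mul_neg, neg_neg, Matrix.mul_smul,
        Matrix.smul_mul, Matrix.mul_assoc]
      module
    rw [hform]
    refine Matrix.PosDef.of_dotProduct_mulVec_pos ?_ ?_
    · apply Matrix.IsHermitian.sub hAh
      rw [← Matrix.diagonal_smul]
      exact Matrix.isHermitian_diagonal _
    · intro x hx
      have hstar : star x = x := by funext i; simp
      rw [hstar]
      -- nonemptiness
      obtain ⟨i₀, hi₀⟩ : ∃ i, x i ≠ 0 := Function.ne_iff.mp hx
      haveI : Nonempty (Fin n) := ⟨i₀⟩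
      set tmin := ⨅ i, τ i with htmin
      set c := ⨅ i, hAh.eigenvalues i with hcdef
      have hbddτ : BddBelow (Set.range τ) := Set.Finite.bddBelow (Set.finite_range _)
      have htle : ∀ i, tmin ≤ τ i := fun i => ciInf_le hbddτ i
      have htminpos : 0 < tmin := by
        obtain ⟨j, hj⟩ := Finite.exists_min τ
        exact lt_of_lt_of_le (hτ j) (le_ciInf hj)
      have hxx : 0 < x ⬝ᵥ x := by
        apply Finset.sum_pos' (fun i _ => mul_self_nonneg (x i))
        exact ⟨i₀, Finset.mem_univ _, mul_self_pos.mpr hi₀⟩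
      have hray := rayleigh_min hAh x
      -- bound the diagonal quadratic form
      have hdq : x ⬝ᵥ (Matrix.diagonal fun i => (τ i)⁻¹) *ᵥ x
          ≤ tmin⁻¹ * (x ⬝ᵥ x) := by
        simp only [dotProduct, Matrix.mulVec_diagonal, Finset.mul_sum]
        apply Finset.sum_le_sum
        intro i _
        have h1 : (τ i)⁻¹ ≤ tmin⁻¹ := inv_anti₀ htminpos (htle i)
        nlinarith [mul_self_nonneg (x i)]
      have hσc : σ * tmin⁻¹ < c := by
        rw [← div_eq_mul_inv, div_lt_iff₀ htminpos]
        linarith [hσ2]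
      rw [Matrix.sub_mulVec, dotProduct_sub, Matrix.smul_mulVec, dotProduct_smul,
        smul_eq_mul]
      have h2 : σ * (x ⬝ᵥ (Matrix.diagonal fun i => (τ i)⁻¹) *ᵥ x)
          ≤ σ * tmin⁻¹ * (x ⬝ᵥ x) := by
        rw [mul_assoc]
        exact mul_le_mul_of_nonneg_left hdq hσ.le
      nlinarith [hray, mul_lt_mul_of_pos_right hσc hxx]
  -- assemble via Schur complement
  have hgoal : Matrix.fromBlocks ((2 : ℝ) • D - σ • (Matrix.diagonal τ)⁻¹) (-Ψ)
      (-Ψᵀ) ((2 : ℝ) • E)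
      = Matrix.fromBlocks ((2 : ℝ) • D - σ • (Matrix.diagonal τ)⁻¹) (-Ψ)
      (-Ψ)ᴴ ((2 : ℝ) • E) := by
    rw [Matrix.conjTranspose_neg, Matrix.conjTranspose_eq_transpose_of_trivial]
  rw [hgoal]
  exact posDef_fromBlocks₂₂' (-Ψ) h2E hSpd
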